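/- Let n ≥ 1, μ ∈ ℝ, and let Λ, T be n×n unitary matrices satisfying the DMSA equations with spectrum {μ}. Then the matrices ΛT and TΛ commute: [ΛT, TΛ] = 0. -/

import Mathlib

open scoped Matrix BigOperators

/-- The commutator `[A,B] = AB − BA` of square matrices. -/
noncomputable def matComm {n : ℕ} (A B : Matrix (Fin n) (Fin n) ℂ) : Matrix (Fin n) (Fin n) ℂ :=
  A * B - B * A

/-- For unitary matrices `Λ`, `T` satisfying the DMSA equations with spectrum `{μ}`,
the matrices `ΛT` and `TΛ` commute. -/
theorem unitary_rep_LT_TL_commute (n : ℕ) (hn : 0 < n) (μ : ℝ)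
    (Λ T : Matrix (Fin n) (Fin n) ℂ)
    (hΛ : Λ ∈ Matrix.unitaryGroup (Fin n) ℂ) (hT : T ∈ Matrix.unitaryGroup (Fin n) ℂ)
    (h1 : (2 * (μ : ℂ)) • Λ =
      matComm (matComm Λ Λᴴ) Λ + matComm (matComm Λ T) Tᴴ + matComm (matComm Λ Tᴴ) T)
    (h2 : (2 * (μ : ℂ)) • T =
      matComm (matComm T Tᴴ) T + matComm (matComm T Λ) Λᴴ + matComm (matComm T Λᴴ) Λ) :
    matComm (Λ * T) (T * Λ) = 0 := by
  have hΛ2 : Λ * Λᴴ = 1 := by simpa [Matrix.star_eq_conjTranspose] using Matrix.mem_unitaryGroup_iff.mp hΛ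
  have hΛ1 : Λᴴ * Λ = 1 := by simpa [Matrix.star_eq_conjTranspose] using Matrix.mem_unitaryGroup_iff'.mp hΛ
  have hT2 : T * Tᴴ = 1 := by simpa [Matrix.star_eq_conjTranspose] using Matrix.mem_unitaryGroup_iff.mp hT
  have hT1 : Tᴴ * T = 1 := by simpa [Matrix.star_eq_conjTranspose] using Matrix.mem_unitaryGroup_iff'.mp hT
  have aΛ : ∀ X : Matrix (Fin n) (Fin n) ℂ, Λᴴ * (Λ * X) = X := fun X => by
    rw [← mul_assoc, hΛ1, one_mul]
  have bΛ : ∀ X : Matrix (Fin n) (Fin n) ℂ, Λ * (Λᴴ * X) = X := fun X => by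
    rw [← mul_assoc, hΛ2, one_mul]
  have aT : ∀ X : Matrix (Fin n) (Fin n) ℂ, Tᴴ * (T * X) = X := fun X => by
    rw [← mul_assoc, hT1, one_mul]
  have bT : ∀ X : Matrix (Fin n) (Fin n) ℂ, T * (Tᴴ * X) = X := fun X => by
    rw [← mul_assoc, hT2, one_mul]
  -- Reduce h1 using unitarity
  have e0 : matComm (matComm Λ Λᴴ) Λ = 0 := by
    unfold matComm; rw [hΛ1, hΛ2, sub_self, zero_mul, mul_zero, sub_self]
  have e2 : matComm (matComm Λ T) Tᴴ = Λ + Λ - T * Λ * Tᴴ - Tᴴ * Λ * T := by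
    unfold matComm
    rw [sub_mul, mul_sub, mul_assoc Λ T Tᴴ, hT2, mul_one, ← mul_assoc Tᴴ T Λ, hT1, one_mul,
      ← mul_assoc Tᴴ Λ T]
    abel
  have e3 : matComm (matComm Λ Tᴴ) T = Λ + Λ - Tᴴ * Λ * T - T * Λ * Tᴴ := by
    unfold matComm
    rw [sub_mul, mul_sub, mul_assoc Λ Tᴴ T, hT1, mul_one, ← mul_assoc T Tᴴ Λ, hT2, one_mul,
      ← mul_assoc T Λ Tᴴ]
    abel
  have E1 : T * Λ * Tᴴ + Tᴴ * Λ * T = ((2:ℂ) - (μ:ℂ)) • Λ := by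
    rw [e0, e2, e3] at h1
    linear_combination (norm := module) ((1/2 : ℂ)) • h1
  -- Reduce h2 symmetrically
  have e0' : matComm (matComm T Tᴴ) T = 0 := by
    unfold matComm; rw [hT1, hT2, sub_self, zero_mul, mul_zero, sub_self]
  have e2' : matComm (matComm T Λ) Λᴴ = T + T - Λ * T * Λᴴ - Λᴴ * T * Λ := by
    unfold matComm
    rw [sub_mul, mul_sub, mul_assoc T Λ Λᴴ, hΛ2, mul_one, ← mul_assoc Λᴴ Λ T, hΛ1, one_mul,
      ← mul_assoc Λᴴ T Λ]
    abel
  have e3' : matComm (matComm T Λᴴ) Λ = T + T - Λᴴ * T * Λ - Λ * T * Λᴴ := by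
    unfold matComm
    rw [sub_mul, mul_sub, mul_assoc T Λᴴ Λ, hΛ1, mul_one, ← mul_assoc Λ Λᴴ T, hΛ2, one_mul,
      ← mul_assoc Λ T Λᴴ]
    abel
  have E2 : Λ * T * Λᴴ + Λᴴ * T * Λ = ((2:ℂ) - (μ:ℂ)) • T := by
    rw [e0', e2', e3'] at h2
    linear_combination (norm := module) ((1/2 : ℂ)) • h2
  -- Conjugate E2 by Λ
  have F1 : Λ * (Λ * T) + T * (Λ * Λ) = ((2:ℂ) - (μ:ℂ)) • (Λ * (T * Λ)) := by
    have h := congrArg (fun M => Λ * (M * Λ)) E2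
    simp only [mul_add, add_mul, mul_assoc, mul_smul_comm, smul_mul_assoc,
      aΛ, bΛ, hΛ1, hΛ2, mul_one, one_mul] at h
    exact h
  -- Conjugate E1 by T
  have F2 : T * (T * Λ) + Λ * (T * T) = ((2:ℂ) - (μ:ℂ)) • (T * (Λ * T)) := by
    have h := congrArg (fun M => T * (M * T)) E1
    simp only [mul_add, add_mul, mul_assoc, mul_smul_comm, smul_mul_assoc,
      aT, bT, hT1, hT2, mul_one, one_mul] at h
    exact h
  -- Multiply F1 on the right by T, F2 on the left by Λ
  have G1 : Λ * (Λ * (T * T)) + T * (Λ * (Λ * T)) = ((2:ℂ) - (μ:ℂ)) • (Λ * (T * (Λ * T))) := by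
    have h := congrArg (fun M => M * T) F1
    simp only [add_mul, mul_assoc, smul_mul_assoc] at h
    exact h
  have G2 : Λ * (T * (T * Λ)) + Λ * (Λ * (T * T)) = ((2:ℂ) - (μ:ℂ)) • (Λ * (T * (Λ * T))) := by
    have h := congrArg (fun M => Λ * M) F2
    simp only [mul_add, mul_assoc, mul_smul_comm] at h
    exact h
  have key : T * (Λ * (Λ * T)) = Λ * (T * (T * Λ)) := by
    have h := G1.trans G2.symm
    linear_combination (norm := module) h
  unfold matComm
  rw [sub_eq_zero, mul_assoc Λ T (T * Λ), mul_assoc T Λ (Λ * T), key]
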